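/- Non-representability of three binary variables by a latent Gaussian discretization: there exists a probability distribution on {0,1}^3 that is not obtained by componentwise thresholding of any trivariate Gaussian, i.e., for which there is no Gaussian vector (Y_1, Y_2, Y_3) and thresholds (\alpha_1, \alpha_2, \alpha_3) with P(X_1 = e_1, X_2 = e_2, X_3 = e_3) = P(sign(Y_1 - \alpha_1) = e_1, sign(Y_2 - \alpha_2) = e_2, sign(Y_3 - \alpha_3) = e_3) for all (e_1,e_2,e_3), where sign encodes \ge threshold as 1. -/

import Mathlib

open MeasureTheory ProbabilityTheory Matrix

namespace ThreeBinaryAux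

/-- the standard trivariate Gaussian product measure -/
noncomputable def ν : Measure (Fin 3 → ℝ) := Measure.pi fun _ : Fin 3 => gaussianReal 0 1

instance : IsProbabilityMeasure ν := by unfold ν; infer_instance

/-- the pattern with a single `true` at position `i` -/
def u (i : Fin 3) : Fin 3 → Bool := fun m => decide (m = i)

/-- the counterexample distribution: uniform on the three single-`true` patterns -/
noncomputable def pdef (e : Fin 3 → Bool) : ℝ :=
  (if e = u 0 then 1/3 else 0) + (if e = u 1 then 1/3 else 0) + (if e = u 2 then 1/3 else 0)

lemma pdef_nonneg (e : Fin 3 → Bool) : 0 ≤ pdef e := by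
  unfold pdef
  refine add_nonneg (add_nonneg ?_ ?_) ?_ <;> split <;> norm_num

lemma pdef_sum : ∑ e : Fin 3 → Bool, pdef e = 1 := by
  unfold pdef
  rw [Finset.sum_add_distrib, Finset.sum_add_distrib]
  simp [Finset.sum_ite_eq']
  norm_num

lemma pdef_two_true {e : Fin 3 → Bool} {m m' : Fin 3} (hne : m ≠ m')
    (hm : e m = true) (hm' : e m' = true) : pdef e = 0 := by
  have key : ∀ i, e ≠ u i := by
    intro i hei
    rw [hei] at hm hm'
    simp only [u, decide_eq_true_eq] at hm hm'
    exact hne (hm.trans hm'.symm)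
  unfold pdef
  rw [if_neg (key 0), if_neg (key 1), if_neg (key 2)]
  norm_num

lemma pdef_u (i : Fin 3) : pdef (u i) = 1/3 := by
  fin_cases i
  · show pdef (u 0) = 1/3
    unfold pdef
    rw [if_pos rfl, if_neg (by decide), if_neg (by decide)]; norm_num
  · show pdef (u 1) = 1/3
    unfold pdef
    rw [if_neg (by decide), if_pos rfl, if_neg (by decide)]; norm_num
  · show pdef (u 2) = 1/3
    unfold pdef
    rw [if_neg (by decide), if_neg (by decide), if_pos rfl]; norm_num

/-- a nonempty open set has positive measure under the standard Gaussian product -/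
lemma nu_open_pos {T : Set (Fin 3 → ℝ)} (hT : IsOpen T) (hne : T.Nonempty) : ν T ≠ 0 := by
  obtain ⟨x, hx⟩ := hne
  obtain ⟨ε, hε, hball⟩ := Metric.isOpen_iff.mp hT x hx
  have hb : Metric.ball x ε = Set.pi Set.univ fun i => Metric.ball (x i) ε := ball_pi x hε
  have hν : ν (Metric.ball x ε) = ∏ i : Fin 3, gaussianReal 0 1 (Metric.ball (x i) ε) := by
    rw [ν, hb]; exact Measure.pi_pi _ _
  have hpos : ∀ i : Fin 3, gaussianReal 0 1 (Metric.ball (x i) ε) ≠ 0 := by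
    intro i hzero
    have habs := gaussianReal_absolutelyContinuous' (0:ℝ) (v := 1) one_ne_zero hzero
    exact absurd habs (Metric.measure_ball_pos volume (x i) hε).ne'
  intro h0
  have hb0 : ν (Metric.ball x ε) = 0 :=
    le_antisymm (h0 ▸ measure_mono hball) zero_le
  rw [hν] at hb0
  obtain ⟨i, _, hi⟩ := Finset.prod_eq_zero_iff.mp hb0
  exact hpos i hi

lemma key (μ : Fin 3 → ℝ) (A : Matrix (Fin 3) (Fin 3) ℝ) (α : Fin 3 → ℝ)
    (h : ∀ e : Fin 3 → Bool, pdef e =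
      (ν {z : Fin 3 → ℝ | ∀ m : Fin 3,
        (α m ≤ μ m + A.mulVec z m ↔ e m = true)}).toReal) : False := by
  have hmv : ∀ (z : Fin 3 → ℝ) (m : Fin 3), A.mulVec z m = A m ⬝ᵥ z := fun z m => rfl
  -- cells with pdef = 0 have measure 0
  have hzero : ∀ e : Fin 3 → Bool, pdef e = 0 →
      ν {z : Fin 3 → ℝ | ∀ m : Fin 3, (α m ≤ μ m + A.mulVec z m ↔ e m = true)} = 0 := by
    intro e he
    have h2 := (h e).symm
    rw [he] at h2
    exact ((ENNReal.toReal_eq_zero_iff _).mp h2).resolve_right (measure_ne_top ν _)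
  -- witnesses in the singleton cells
  have hwit : ∀ i : Fin 3, ∃ z : Fin 3 → ℝ,
      (α i ≤ μ i + A i ⬝ᵥ z) ∧ ∀ m, m ≠ i → ¬ (α m ≤ μ m + A m ⬝ᵥ z) := by
    intro i
    have hne : ν {z : Fin 3 → ℝ | ∀ m : Fin 3,
        (α m ≤ μ m + A.mulVec z m ↔ u i m = true)} ≠ 0 := by
      intro h0
      have := h (u i)
      rw [pdef_u, h0] at this
      norm_num at this
    obtain ⟨z, hz⟩ := nonempty_of_measure_ne_zero hne
    refine ⟨z, ?_, ?_⟩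
    · have hii : u i i = true := by simp [u]
      exact (hz i).mpr hii
    · intro m hm hc
      have := (hz m).mp hc
      simp only [u, decide_eq_true_eq] at this
      exact hm this
  -- pairwise disjointness of the open half-spaces
  have hdisj : ∀ m m' : Fin 3, m ≠ m' → ∀ z : Fin 3 → ℝ,
      α m < μ m + A m ⬝ᵥ z → α m' < μ m' + A m' ⬝ᵥ z → False := by
    intro m m' hmm' z h1 h2
    have hcont : ∀ k : Fin 3, Continuous fun w : Fin 3 → ℝ => μ k + A k ⬝ᵥ w := by
      intro k
      show Continuous fun w : Fin 3 → ℝ => μ k + ∑ j, A k j * w j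
      exact continuous_const.add (continuous_finset_sum _ fun j _ =>
        continuous_const.mul (continuous_apply j))
    set T : Set (Fin 3 → ℝ) :=
      {w | α m < μ m + A m ⬝ᵥ w ∧ α m' < μ m' + A m' ⬝ᵥ w} with hTdef
    have hTopen : IsOpen T :=
      (isOpen_lt continuous_const (hcont m)).inter (isOpen_lt continuous_const (hcont m'))
    have hTne : T.Nonempty := ⟨z, h1, h2⟩
    refine nu_open_pos hTopen hTne ?_
    have hsub : T ⊆ ⋃ e ∈ Finset.univ.filter
        (fun e : Fin 3 → Bool => e m = true ∧ e m' = true),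
        {z : Fin 3 → ℝ | ∀ k : Fin 3, (α k ≤ μ k + A.mulVec z k ↔ e k = true)} := by
      intro w hw
      have hmem : (fun k => decide (α k ≤ μ k + A k ⬝ᵥ w)) ∈ Finset.univ.filter
          (fun e : Fin 3 → Bool => e m = true ∧ e m' = true) :=
        Finset.mem_filter.mpr ⟨Finset.mem_univ _,
          decide_eq_true hw.1.le, decide_eq_true hw.2.le⟩
      refine Set.mem_biUnion hmem ?_
      intro k
      exact ⟨fun hk => decide_eq_true hk, fun hk => of_decide_eq_true hk⟩
    refine le_antisymm ?_ zero_le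
    calc ν T ≤ _ := measure_mono hsub
    _ ≤ ∑ e ∈ Finset.univ.filter (fun e : Fin 3 → Bool => e m = true ∧ e m' = true),
        ν {z : Fin 3 → ℝ | ∀ k : Fin 3, (α k ≤ μ k + A.mulVec z k ↔ e k = true)} :=
        measure_biUnion_finset_le _ _
    _ = 0 := by
        refine Finset.sum_eq_zero fun e he => ?_
        obtain ⟨-, hm, hm'⟩ := Finset.mem_filter.mp he
        exact hzero e (pdef_two_true hmm' hm hm')
  -- a strict point in each half-space
  have hstrict : ∀ m : Fin 3, ∃ y : Fin 3 → ℝ, α m < μ m + A m ⬝ᵥ y := by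
    intro m
    obtain ⟨z, hz1, -⟩ := hwit m
    set m2 : Fin 3 := if m = 0 then 1 else 0 with hm2
    have hm2ne : m2 ≠ m := by
      rw [hm2]
      rcases eq_or_ne m 0 with h0 | h0
      · rw [if_pos h0, h0]; decide
      · rw [if_neg h0]; exact Ne.symm h0
    obtain ⟨z', -, hz'2⟩ := hwit m2
    have hz'm : A m ⬝ᵥ z' < α m - μ m := by
      have := hz'2 m (fun hh => hm2ne hh.symm)
      push_neg at this
      linarith
    refine ⟨z + (z - z'), ?_⟩
    have hexp : A m ⬝ᵥ (z + (z - z')) = A m ⬝ᵥ z + (A m ⬝ᵥ z - A m ⬝ᵥ z') := by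
      rw [dotProduct_add, dotProduct_sub]
    rw [hexp]
    linarith
  -- the cone condition: nonneg on half-space m implies nonpos on m'
  have hC : ∀ m m' : Fin 3, m ≠ m' → ∀ w : Fin 3 → ℝ,
      0 ≤ A m ⬝ᵥ w → A m' ⬝ᵥ w ≤ 0 := by
    intro m m' hmm' w h0
    by_contra hcon
    push_neg at hcon
    obtain ⟨y, hy⟩ := hstrict m
    set c : ℝ := (α m' - μ m' + 1 - A m' ⬝ᵥ y) / (A m' ⬝ᵥ w) with hc
    set lam : ℝ := max 0 c with hlam
    refine hdisj m m' hmm' (y + lam • w) ?_ ?_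
    · have : A m ⬝ᵥ (y + lam • w) = A m ⬝ᵥ y + lam * (A m ⬝ᵥ w) := by
        rw [dotProduct_add, dotProduct_smul, smul_eq_mul]
      rw [this]
      nlinarith [le_max_left (0:ℝ) c, mul_nonneg (le_max_left (0:ℝ) c) h0]
    · have hexp : A m' ⬝ᵥ (y + lam • w) = A m' ⬝ᵥ y + lam * (A m' ⬝ᵥ w) := by
        rw [dotProduct_add, dotProduct_smul]; ring_nf
      have hcl : c * (A m' ⬝ᵥ w) = α m' - μ m' + 1 - A m' ⬝ᵥ y := by
        rw [hc, div_mul_cancel₀ _ hcon.ne']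
      have hge : c * (A m' ⬝ᵥ w) ≤ lam * (A m' ⬝ᵥ w) :=
        mul_le_mul_of_nonneg_right (le_max_right 0 c) hcon.le
      rw [hexp]
      linarith
  -- rows are nonzero
  have hGpos : ∀ m : Fin 3, 0 < A m ⬝ᵥ A m := by
    intro m
    have hself : 0 ≤ A m ⬝ᵥ A m :=
      Finset.sum_nonneg fun j _ => mul_self_nonneg _
    rcases hself.lt_or_eq with hlt | heq
    · exact hlt
    · exfalso
      have hA0 : A m = 0 := dotProduct_self_eq_zero.mp heq.symm
      obtain ⟨z, hz1, -⟩ := hwit m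
      set m2 : Fin 3 := if m = 0 then 1 else 0 with hm2
      have hm2ne : m2 ≠ m := by
        rw [hm2]
        rcases eq_or_ne m 0 with h0 | h0
        · rw [if_pos h0, h0]; decide
        · rw [if_neg h0]; exact Ne.symm h0
      obtain ⟨z', -, hz'2⟩ := hwit m2
      have h1 := hz'2 m (fun hh => hm2ne hh.symm)
      rw [hA0, zero_dotProduct] at hz1 h1
      exact h1 hz1
  -- final contradiction via anti-parallel rows
  have hrow : ∀ m m' : Fin 3, m ≠ m' →
      ∃ t : ℝ, t < 0 ∧ A m' = t • A m := by
    intro m m' hmm'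
    set t : ℝ := (A m' ⬝ᵥ A m) / (A m ⬝ᵥ A m) with ht
    set w1 : Fin 3 → ℝ := A m' - t • A m with hw1
    have hS0 : A m ⬝ᵥ w1 = 0 := by
      rw [hw1, dotProduct_sub, dotProduct_smul, smul_eq_mul, ht,
        dotProduct_comm (A m) (A m'), div_mul_cancel₀ _ (hGpos m).ne']
      ring
    have hS1le : A m' ⬝ᵥ w1 ≤ 0 := hC m m' hmm' w1 hS0.ge
    have hS1ge : 0 ≤ A m' ⬝ᵥ w1 := by
      have hneg : A m ⬝ᵥ (-w1) = 0 := by rw [dotProduct_neg, hS0, neg_zero]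
      have := hC m m' hmm' (-w1) hneg.ge
      rw [dotProduct_neg] at this
      linarith
    have hS1 : A m' ⬝ᵥ w1 = 0 := le_antisymm hS1le hS1ge
    have hww : w1 ⬝ᵥ w1 = 0 := by
      rw [hw1]
      rw [sub_dotProduct, smul_dotProduct, smul_eq_mul, ← hw1, hS1, hS0]
      ring
    have hw0 : w1 = 0 := dotProduct_self_eq_zero.mp hww
    have heq : A m' = t • A m := by
      have := sub_eq_zero.mp (hw1 ▸ hw0)
      exact this
    refine ⟨t, ?_, heq⟩
    have htle : t ≤ 0 := by
      have hle : A m' ⬝ᵥ A m ≤ 0 := hC m m' hmm' (A m) (hGpos m).le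
      exact div_nonpos_iff.mpr (Or.inr ⟨hle, (hGpos m).le⟩)
    rcases htle.lt_or_eq with hlt | heq0
    · exact hlt
    · exfalso
      rw [heq0, zero_smul] at heq
      have := hGpos m'
      rw [heq, zero_dotProduct] at this
      exact lt_irrefl _ this
  obtain ⟨t1, ht1, hA1⟩ := hrow 0 1 (by decide)
  obtain ⟨t2, ht2, hA2⟩ := hrow 0 2 (by decide)
  have hG21 : A 2 ⬝ᵥ A 1 ≤ 0 := hC 1 2 (by decide) (A 1) (hGpos 1).le
  have hcalc : A 2 ⬝ᵥ A 1 = t2 * (t1 * (A 0 ⬝ᵥ A 0)) := by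
    rw [hA1, hA2, smul_dotProduct, dotProduct_smul, smul_eq_mul, smul_eq_mul]
  nlinarith [mul_pos (mul_pos_of_neg_of_neg ht2 ht1) (hGpos 0)]

end ThreeBinaryAux

open ThreeBinaryAux in
/-- Non-representability of three binary variables by a latent Gaussian discretization:
there is a probability distribution on {0,1}³ that is not obtained by componentwise
thresholding of any (possibly degenerate) trivariate Gaussian vector, the latter being
written as Y = μ + A Z with Z a standard trivariate normal. -/
theorem three_binary_not_latent_gaussian :
    ∃ p : (Fin 3 → Bool) → ℝ,
      (∀ e, 0 ≤ p e) ∧ (∑ e : Fin 3 → Bool, p e = 1) ∧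
      ¬ ∃ (μ : Fin 3 → ℝ) (A : Matrix (Fin 3) (Fin 3) ℝ) (α : Fin 3 → ℝ),
          ∀ e : Fin 3 → Bool,
            p e =
              ((Measure.pi fun _ : Fin 3 => gaussianReal 0 1)
                {z : Fin 3 → ℝ | ∀ m : Fin 3,
                  (α m ≤ μ m + A.mulVec z m ↔ e m = true)}).toReal := by
  refine ⟨pdef, pdef_nonneg, pdef_sum, ?_⟩
  rintro ⟨μ, A, α, h⟩
  exact key μ A α h
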